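/- arXiv:1308.2530 — 5 statements merged into one kernel-verified Lean document; each statement's English description precedes it below -/
import Mathlib

section
/- Let U ⊂ ℝ² be open and let F = (F₁, F₂, F₃) : U → ℝ³ be differentiable with |F(y)| = 1 and F₃(y) ≠ 0 for every y ∈ U. Then at every point of U one has F · (∂₁F × ∂₂F) = (1/F₃) (∂₁F₁ ∂₂F₂ − ∂₂F₁ ∂₁F₂), where × denotes the cross product in ℝ³ and · the Euclidean inner product. -/
/-- Let `U ⊂ ℝ²` be open and `F : U → ℝ³` differentiable with `|F| = 1` and `F₃ ≠ 0` on `U`.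
Then at every point of `U` one has
`F · (∂₁F × ∂₂F) = (1/F₃)(∂₁F₁ ∂₂F₂ − ∂₂F₁ ∂₁F₂)`. -/
theorem dot_cross_eq_inv_F3_mul_det (U : Set (Fin 2 → ℝ)) (hU : IsOpen U)
    (F : (Fin 2 → ℝ) → (Fin 3 → ℝ))
    (hF : ∀ y ∈ U, DifferentiableAt ℝ F y)
    (hnorm : ∀ y ∈ U, ∑ i : Fin 3, (F y i) ^ 2 = 1)
    (hF3 : ∀ y ∈ U, F y 2 ≠ 0) :
    ∀ y ∈ U,
      (∑ i : Fin 3, F y i *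
          crossProduct (fderiv ℝ F y (Pi.single 0 1)) (fderiv ℝ F y (Pi.single 1 1)) i)
        = (1 / F y 2) *
            (fderiv ℝ F y (Pi.single 0 1) 0 * fderiv ℝ F y (Pi.single 1 1) 1
              - fderiv ℝ F y (Pi.single 1 1) 0 * fderiv ℝ F y (Pi.single 0 1) 1) := by
  intro y hy
  have hFy := (hF y hy).hasFDerivAt
  have hi : ∀ i : Fin 3, HasFDerivAt (fun x => F x i)
      ((ContinuousLinearMap.proj i).comp (fderiv ℝ F y)) y := fun i =>
    (ContinuousLinearMap.proj (R := ℝ) (φ := fun _ : Fin 3 => ℝ) i).hasFDerivAt.comp y hFy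
  have hsum : HasFDerivAt (fun x => ∑ i : Fin 3, F x i ^ 2)
      (∑ i : Fin 3, (F y i • ((ContinuousLinearMap.proj i).comp (fderiv ℝ F y))
        + F y i • ((ContinuousLinearMap.proj i).comp (fderiv ℝ F y)))) y := by
    apply HasFDerivAt.fun_sum
    intro i _
    simpa [pow_two] using (hi i).fun_mul (hi i)
  have h0 : HasFDerivAt (fun x => ∑ i : Fin 3, F x i ^ 2)
      (0 : (Fin 2 → ℝ) →L[ℝ] ℝ) y := by
    apply (hasFDerivAt_const (1 : ℝ) y).congr_of_eventuallyEq
    filter_upwards [hU.mem_nhds hy] with x hx using hnorm x hx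
  have hzero := hsum.unique h0
  have key : ∀ v : Fin 2 → ℝ, ∑ i : Fin 3, F y i * fderiv ℝ F y v i = 0 := by
    intro v
    have := congrArg (fun L : (Fin 2 → ℝ) →L[ℝ] ℝ => L v) hzero
    simp only [ContinuousLinearMap.coe_sum', Finset.sum_apply,
      ContinuousLinearMap.add_apply, ContinuousLinearMap.coe_smul',
      Pi.smul_apply, ContinuousLinearMap.coe_comp', Function.comp_apply,
      ContinuousLinearMap.proj_apply, ContinuousLinearMap.zero_apply,
      smul_eq_mul] at this
    rw [Fin.sum_univ_three] at this ⊢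
    linarith
  set a : Fin 3 → ℝ := fderiv ℝ F y (Pi.single 0 1) with ha_def
  set b : Fin 3 → ℝ := fderiv ℝ F y (Pi.single 1 1) with hb_def
  have ha := key (Pi.single 0 1)
  have hb := key (Pi.single 1 1)
  have hn := hnorm y hy
  rw [Fin.sum_univ_three] at ha hb hn ⊢
  have h2 := hF3 y hy
  simp only [cross_apply, Matrix.cons_val_zero, Matrix.cons_val_one, Matrix.head_cons,
    Matrix.cons_val_two, Matrix.tail_cons]
  field_simp
  linear_combination (F y 1 * b 0 - F y 0 * b 1) * ha + (F y 0 * a 1 - F y 1 * a 0) * hb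
    + (a 0 * b 1 - a 1 * b 0) * hn
end

section
/- Let U ⊂ ℝ² be open, let F : U → ℝ² be of class C², and let h : ℝ² → ℝ² be of class C¹. Then at every point of U one has ∇ · ( cof(DF)ᵀ (h ∘ F) ) = ((∇ · h) ∘ F) · det DF, where the divergence on the left is taken row-wise of the ℝ²-valued function y ↦ cof(DF(y))ᵀ h(F(y)). -/
/-- The cofactor matrix of a real `2×2` matrix `M = [[m₁₁, m₁₂],[m₂₁, m₂₂]]`, namely
`cof M = [[m₂₂, −m₂₁],[−m₁₂, m₁₁]]`, so that `Mᵀ * cof M = (det M) • 1`. -/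
def cof2 (M : Matrix (Fin 2) (Fin 2) ℝ) : Matrix (Fin 2) (Fin 2) ℝ :=
  !![M 1 1, -(M 1 0); -(M 0 1), M 0 0]

/-- The Jacobian matrix of a map `F : ℝ² → ℝ²` at a point `y`. -/
noncomputable def jac2 (F : (Fin 2 → ℝ) → (Fin 2 → ℝ)) (y : Fin 2 → ℝ) :
    Matrix (Fin 2) (Fin 2) ℝ :=
  Matrix.of fun i j => fderiv ℝ F y (Pi.single j 1) i

/-- Piola identity: if `U ⊂ ℝ²` is open, `F : U → ℝ²` is `C²` and `h : ℝ² → ℝ²` is `C¹`,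
then `∇ · (cof(DF)ᵀ (h ∘ F)) = ((∇ · h) ∘ F) · det DF` on `U`,
the divergence on the left being taken row-wise. -/
theorem div_cof_transpose_comp (U : Set (Fin 2 → ℝ)) (hU : IsOpen U)
    (F : (Fin 2 → ℝ) → (Fin 2 → ℝ)) (hF : ContDiffOn ℝ 2 F U)
    (h : (Fin 2 → ℝ) → (Fin 2 → ℝ)) (hh : ContDiff ℝ 1 h) :
    ∀ y ∈ U,
      (∑ i : Fin 2,
          fderiv ℝ (fun z => ((cof2 (jac2 F z)).transpose).mulVec (h (F z))) y (Pi.single i 1) i)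
        = (∑ i : Fin 2, fderiv ℝ h (F y) (Pi.single i 1) i) * (jac2 F y).det := by
  intro y hy
  have hyU : U ∈ nhds y := hU.mem_nhds hy
  have hFy : ContDiffAt ℝ 2 F y := hF.contDiffAt hyU
  have hφ : ContDiffAt ℝ 1 (fderiv ℝ F) y := hFy.fderiv_right le_rfl
  have hφd : DifferentiableAt ℝ (fderiv ℝ F) y := hφ.differentiableAt one_ne_zero
  have hFdy : DifferentiableAt ℝ F y := hFy.differentiableAt two_ne_zero
  have hsymm : IsSymmSndFDerivAt ℝ F y := hFy.isSymmSndFDerivAt (by simp)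
  -- component functions of the Jacobian
  set P : Fin 2 → Fin 2 → (Fin 2 → ℝ) → ℝ :=
    fun i j z => fderiv ℝ F z (Pi.single j 1) i with hP
  set Q : Fin 2 → (Fin 2 → ℝ) → ℝ := fun k z => h (F z) k with hQ
  -- derivatives of P
  have hPder : ∀ i j, HasFDerivAt (P i j)
      ((((ContinuousLinearMap.proj i : (Fin 2 → ℝ) →L[ℝ] ℝ).comp
        (ContinuousLinearMap.apply ℝ (Fin 2 → ℝ) (Pi.single j 1))).comp
          (fderiv ℝ (fderiv ℝ F) y))) y := by
    intro i j
    exact (((ContinuousLinearMap.proj i : (Fin 2 → ℝ) →L[ℝ] ℝ).comp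
      (ContinuousLinearMap.apply ℝ (Fin 2 → ℝ) (Pi.single j 1))).hasFDerivAt).comp y
        hφd.hasFDerivAt
  have hPd : ∀ i j, DifferentiableAt ℝ (P i j) y := fun i j => (hPder i j).differentiableAt
  have hPf : ∀ i j v, fderiv ℝ (P i j) y v = fderiv ℝ (fderiv ℝ F) y v (Pi.single j 1) i := by
    intro i j v
    rw [(hPder i j).fderiv]; rfl
  -- derivatives of Q
  have hQder : ∀ k, HasFDerivAt (Q k)
      ((ContinuousLinearMap.proj k : (Fin 2 → ℝ) →L[ℝ] ℝ).comp
        ((fderiv ℝ h (F y)).comp (fderiv ℝ F y))) y := by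
    intro k
    exact ((ContinuousLinearMap.proj k : (Fin 2 → ℝ) →L[ℝ] ℝ).hasFDerivAt).comp y
      (((hh.differentiable one_ne_zero) (F y)).hasFDerivAt.comp y hFdy.hasFDerivAt)
  have hQd : ∀ k, DifferentiableAt ℝ (Q k) y := fun k => (hQder k).differentiableAt
  have hQf : ∀ k v, fderiv ℝ (Q k) y v = fderiv ℝ h (F y) (fderiv ℝ F y v) k := by
    intro k v; rw [(hQder k).fderiv]; rfl
  -- concrete form of the components of the vector field
  have comp0 : (fun z => (((cof2 (jac2 F z)).transpose).mulVec (h (F z))) 0)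
      = fun z => P 1 1 z * Q 0 z - P 0 1 z * Q 1 z := by
    funext z
    simp [cof2, jac2, Matrix.mulVec, dotProduct, Fin.sum_univ_two, P, Q]
    ring
  have comp1 : (fun z => (((cof2 (jac2 F z)).transpose).mulVec (h (F z))) 1)
      = fun z => P 0 0 z * Q 1 z - P 1 0 z * Q 0 z := by
    funext z
    simp [cof2, jac2, Matrix.mulVec, dotProduct, Fin.sum_univ_two, P, Q]
    ring
  have hcompd : ∀ i : Fin 2, DifferentiableAt ℝ
      (fun z => (((cof2 (jac2 F z)).transpose).mulVec (h (F z))) i) y := by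
    intro i
    fin_cases i
    · show DifferentiableAt ℝ (fun z => (((cof2 (jac2 F z)).transpose).mulVec (h (F z))) 0) y
      rw [comp0]; exact ((hPd 1 1).mul (hQd 0)).sub ((hPd 0 1).mul (hQd 1))
    · show DifferentiableAt ℝ (fun z => (((cof2 (jac2 F z)).transpose).mulVec (h (F z))) 1) y
      rw [comp1]; exact ((hPd 0 0).mul (hQd 1)).sub ((hPd 1 0).mul (hQd 0))
  -- reduce fderiv of the Pi-valued function to component fderivs
  have hpi : ∀ (v : Fin 2 → ℝ) (i : Fin 2),
      fderiv ℝ (fun z => ((cof2 (jac2 F z)).transpose).mulVec (h (F z))) y v i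
      = fderiv ℝ (fun z => (((cof2 (jac2 F z)).transpose).mulVec (h (F z))) i) y v := by
    intro v i
    rw [fderiv_pi hcompd]
    rfl
  -- abbreviations at the point y
  have hdet : (jac2 F y).det = P 0 0 y * P 1 1 y - P 0 1 y * P 1 0 y := by
    rw [Matrix.det_fin_two]; rfl
  -- expansion of fderiv h (F y) applied to a vector
  have hHlin : ∀ (w : Fin 2 → ℝ) (k : Fin 2), fderiv ℝ h (F y) w k
      = w 0 * fderiv ℝ h (F y) (Pi.single 0 1) k + w 1 * fderiv ℝ h (F y) (Pi.single 1 1) k := by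
    intro w k
    have hw : w = w 0 • (Pi.single 0 1 : Fin 2 → ℝ) + w 1 • (Pi.single 1 1 : Fin 2 → ℝ) := by
      funext j; fin_cases j <;> simp [Pi.single_apply]
    calc fderiv ℝ h (F y) w k
        = fderiv ℝ h (F y) (w 0 • (Pi.single 0 1 : Fin 2 → ℝ)
            + w 1 • (Pi.single 1 1 : Fin 2 → ℝ)) k := by rw [← hw]
      _ = _ := by rw [map_add, map_smul, map_smul]; rfl
  -- the entries of the Jacobian at y
  have hB : ∀ (j i : Fin 2), fderiv ℝ F y (Pi.single j 1) i = P i j y := fun j i => rfl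
  -- second derivative symmetry, componentwise
  have hsym' : ∀ i : Fin 2,
      fderiv ℝ (fderiv ℝ F) y (Pi.single 0 1) (Pi.single 1 1) i
      = fderiv ℝ (fderiv ℝ F) y (Pi.single 1 1) (Pi.single 0 1) i := by
    intro i
    rw [hsymm (Pi.single 0 1) (Pi.single 1 1)]
  -- now compute
  rw [Fin.sum_univ_two, Fin.sum_univ_two, hpi, hpi, comp0, comp1]
  rw [fderiv_fun_sub ((hPd 1 1).fun_mul (hQd 0)) ((hPd 0 1).fun_mul (hQd 1)),
      fderiv_fun_sub ((hPd 0 0).fun_mul (hQd 1)) ((hPd 1 0).fun_mul (hQd 0)),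
      fderiv_fun_mul (hPd 1 1) (hQd 0), fderiv_fun_mul (hPd 0 1) (hQd 1),
      fderiv_fun_mul (hPd 0 0) (hQd 1), fderiv_fun_mul (hPd 1 0) (hQd 0)]
  simp only [ContinuousLinearMap.sub_apply, ContinuousLinearMap.add_apply,
    ContinuousLinearMap.coe_smul', Pi.smul_apply, smul_eq_mul]
  rw [hPf, hPf, hPf, hPf, hQf, hQf, hQf, hQf]
  rw [hHlin (fderiv ℝ F y (Pi.single 0 1)), hHlin (fderiv ℝ F y (Pi.single 0 1)),
      hHlin (fderiv ℝ F y (Pi.single 1 1)), hHlin (fderiv ℝ F y (Pi.single 1 1))]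
  rw [hdet]
  simp only [hB]
  rw [hsym' 0, hsym' 1]
  ring
end

section
/- Define G : ℝ × ℝ × [0, π/2) → ℝ² by G(r, r₁, β) = ( r cos β + 2 r sin²β · arcosh(1/ sin β) − r₁ cos β − (1 − r₁) sin β , (r + r₁) sin β − (1 − r₁) cos β ) for β ∈ (0, π/2), and G(r, r₁, 0) := (r − r₁, −(1 − r₁)) (the continuous extension, since sin²β · arcosh(1/sin β) → 0 as β → 0⁺). Then G(1,1,0) = 0, and there exist ε > 0 and functions r₁, β : (1−ε, 1] → ℝ of class C¹ (with one-sided derivatives at 1) such that: r₁(1) = 1, β(1) = 0; for every r ∈ (1−ε, 1) one has 0 < r₁(r) < 1, 0 < β(r) < π/2, and G(r, r₁(r), β(r)) = 0; and the derivatives at r = 1 satisfy r₁'(1) = 1 and β'(1) = −1/2. -/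
open Real

/-- The inverse hyperbolic cosine, `arcosh x = log (x + √(x² − 1))` for `x ≥ 1`. -/
noncomputable def arcosh (x : ℝ) : ℝ := Real.log (x + Real.sqrt (x ^ 2 - 1))

/-- The map `G(r, r₁, β)` encoding the matching conditions for a catenoid neck joining
two nested spheres of radii `1` and `r` inside the unit ball; at `β = 0` it is defined
by its continuous extension `G(r, r₁, 0) = (r − r₁, −(1 − r₁))`. -/
noncomputable def Gmatch (r r₁ β : ℝ) : ℝ × ℝ :=
  if β = 0 then (r - r₁, -(1 - r₁))
  else
    (r * Real.cos β + 2 * r * Real.sin β ^ 2 * _root_.arcosh (1 / Real.sin β)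
        - r₁ * Real.cos β - (1 - r₁) * Real.sin β,
      (r + r₁) * Real.sin β - (1 - r₁) * Real.cos β)

/-! ### Auxiliary functions -/

noncomputable def Hfun (b : ℝ) : ℝ :=
  if b ≤ 0 then 0 else 2 * Real.sin b ^ 2 * _root_.arcosh (1 / Real.sin b)

noncomputable def Hd (b : ℝ) : ℝ :=
  if b ≤ 0 then 0 else 4 * Real.sin b * Real.cos b * _root_.arcosh (1 / Real.sin b) - 2 * Real.sin b

noncomputable def Fm (b : ℝ) : ℝ :=
  Real.cos (2*b) + Real.sin (2*b) + Hfun b * (Real.sin b + Real.cos b)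

noncomputable def Fd (b : ℝ) : ℝ :=
  -2*Real.sin (2*b) + 2*Real.cos (2*b) + Hd b * (Real.sin b + Real.cos b)
    + Hfun b * (Real.cos b - Real.sin b)

lemma arcosh_eq {b : ℝ} (h0 : 0 < b) (h1 : b < π/2) :
    _root_.arcosh (1 / Real.sin b) = Real.log (1 + Real.cos b) - Real.log (Real.sin b) := by
  have hs : 0 < Real.sin b := Real.sin_pos_of_pos_of_lt_pi h0 (h1.trans (half_lt_self Real.pi_pos))
  have hc : 0 < Real.cos b := Real.cos_pos_of_mem_Ioo ⟨by linarith [Real.pi_pos], h1⟩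
  have hsq : (1 / Real.sin b) ^ 2 - 1 = (Real.cos b / Real.sin b) ^ 2 := by
    have := Real.sin_sq_add_cos_sq b
    field_simp
    linarith
  rw [_root_.arcosh, hsq, Real.sqrt_sq (by positivity)]
  rw [show 1 / Real.sin b + Real.cos b / Real.sin b = (1 + Real.cos b) / Real.sin b by ring]
  rw [Real.log_div (by positivity) (ne_of_gt hs)]

lemma Hfun_eq {b : ℝ} (h0 : 0 < b) (h1 : b < π/2) :
    Hfun b = 2 * Real.sin b ^ 2 * (Real.log (1 + Real.cos b) - Real.log (Real.sin b)) := by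
  rw [Hfun, if_neg (not_le.2 h0), arcosh_eq h0 h1]

lemma Hd_eq {b : ℝ} (h0 : 0 < b) (h1 : b < π/2) :
    Hd b = 4 * Real.sin b * Real.cos b * (Real.log (1 + Real.cos b) - Real.log (Real.sin b))
      - 2 * Real.sin b := by
  rw [Hd, if_neg (not_le.2 h0), arcosh_eq h0 h1]

lemma hasDerivAt_Hfun_pos {b : ℝ} (h0 : 0 < b) (h1 : b < π/2) :
    HasDerivAt Hfun (Hd b) b := by
  have hs : 0 < Real.sin b := Real.sin_pos_of_pos_of_lt_pi h0 (h1.trans (half_lt_self Real.pi_pos))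
  have hc : 0 < Real.cos b := Real.cos_pos_of_mem_Ioo ⟨by linarith [Real.pi_pos], h1⟩
  have h1c : (0:ℝ) < 1 + Real.cos b := by linarith
  have hd1 : HasDerivAt (fun x => Real.log (1 + Real.cos x)) (-Real.sin b / (1 + Real.cos b)) b := by
    have : HasDerivAt (fun x => 1 + Real.cos x) (-Real.sin b) b :=
      (Real.hasDerivAt_cos b).const_add 1
    simpa using this.log (ne_of_gt h1c)
  have hd2 : HasDerivAt (fun x => Real.log (Real.sin x)) (Real.cos b / Real.sin b) b :=
    (Real.hasDerivAt_sin b).log (ne_of_gt hs)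
  have hd3 : HasDerivAt (fun x => Real.sin x ^ 2) (2 * Real.sin b * Real.cos b) b := by
    exact ((Real.hasDerivAt_sin b).pow 2).congr_deriv (by ring)
  have hD : HasDerivAt
      (fun x => 2 * Real.sin x ^ 2 * (Real.log (1 + Real.cos x) - Real.log (Real.sin x)))
      (Hd b) b := by
    have := ((hd3.const_mul 2).mul (hd1.sub hd2))
    refine this.congr_deriv ?_
    rw [Hd_eq h0 h1]
    simp only [Pi.sub_apply]
    have hpyth := Real.sin_sq_add_cos_sq b
    field_simp
    ring_nf
    nlinarith [hpyth]
  refine hD.congr_of_eventuallyEq ?_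
  have hmem : Set.Ioo 0 (π/2) ∈ nhds b := (isOpen_Ioo).mem_nhds ⟨h0, h1⟩
  filter_upwards [hmem] with x hx
  rw [Hfun_eq hx.1 hx.2]

open Filter in
lemma tendsto_sin_log_sin :
    Tendsto (fun x => Real.sin x * Real.log (Real.sin x)) (nhds 0) (nhds 0) := by
  have h := (Real.continuous_mul_log.comp Real.continuous_sin).tendsto 0
  simpa [Function.comp_def] using h

open Filter in
lemma tendsto_sin_log_one_cos :
    Tendsto (fun x => Real.sin x * Real.log (1 + Real.cos x)) (nhds 0) (nhds 0) := by
  have h : ContinuousAt (fun x => Real.sin x * Real.log (1 + Real.cos x)) 0 := by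
    apply Real.continuous_sin.continuousAt.mul
    apply ContinuousAt.log
    · exact (continuous_const.add Real.continuous_cos).continuousAt
    · simp
  simpa using h.tendsto

lemma hasDerivAt_Hfun_neg {b : ℝ} (hb : b < 0) : HasDerivAt Hfun (Hd b) b := by
  have : Hd b = 0 := if_pos hb.le
  rw [this]
  refine (hasDerivAt_const b 0).congr_of_eventuallyEq ?_
  filter_upwards [Iio_mem_nhds hb] with x hx
  exact if_pos (le_of_lt hx)

open Filter in
lemma hasDerivAt_Hfun_zero : HasDerivAt Hfun (Hd 0) 0 := by
  have h0 : Hd 0 = 0 := if_pos le_rfl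
  rw [h0]
  have hleft : HasDerivWithinAt Hfun 0 (Set.Iic 0) 0 := by
    refine (hasDerivWithinAt_const 0 _ 0).congr (fun x hx => if_pos hx) (if_pos le_rfl)
  have hright : HasDerivWithinAt Hfun 0 (Set.Ici 0) 0 := by
    rw [hasDerivWithinAt_iff_tendsto_slope]
    have hsub : Set.Ici (0:ℝ) \ {0} = Set.Ioi 0 := by
      ext x; simp [lt_iff_le_and_ne, eq_comm, and_comm]
    rw [hsub]
    have key : Tendsto (fun x => 2 * (Real.sin x / x) *
        (Real.sin x * Real.log (1 + Real.cos x) - Real.sin x * Real.log (Real.sin x)))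
        (nhdsWithin 0 (Set.Ioi 0)) (nhds 0) := by
      have t1 : Tendsto (fun x => Real.sin x / x) (nhdsWithin 0 (Set.Ioi 0)) (nhds 1) := by
        have := hasDerivAt_iff_tendsto_slope.1 (Real.hasDerivAt_sin 0)
        rw [Real.cos_zero] at this
        have := this.mono_left (nhdsWithin_mono 0 (by intro x hx; exact ne_of_gt hx))
        refine this.congr (fun x => ?_)
        simp [slope_def_field]
      have t2 := tendsto_sin_log_one_cos.mono_left (nhdsWithin_le_nhds (s := Set.Ioi (0:ℝ)))
      have t3 := tendsto_sin_log_sin.mono_left (nhdsWithin_le_nhds (s := Set.Ioi (0:ℝ)))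
      have := ((t1.const_mul 2).mul (t2.sub t3))
      simpa using this
    refine key.congr' ?_
    filter_upwards [self_mem_nhdsWithin,
      nhdsWithin_le_nhds (Iio_mem_nhds (by positivity : (0:ℝ) < π/2))] with x hx hx2
    have hx0 : (0:ℝ) < x := hx
    rw [slope_def_field, Hfun_eq hx0 hx2]
    simp only [if_pos le_rfl, Hfun]
    field_simp
    simp [hx0.ne']
  exact hasDerivWithinAt_univ.1 (by simpa [Set.Iic_union_Ici] using hleft.union hright)

lemma hasDerivAt_Hfun {b : ℝ} (hb : b ∈ Set.Ioo (-(π/2)) (π/2)) : HasDerivAt Hfun (Hd b) b := by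
  rcases lt_trichotomy b 0 with h | h | h
  · exact hasDerivAt_Hfun_neg h
  · rw [h]; exact hasDerivAt_Hfun_zero
  · exact hasDerivAt_Hfun_pos h hb.2

lemma hasDerivAt_Fm {b : ℝ} (hb : b ∈ Set.Ioo (-(π/2)) (π/2)) : HasDerivAt Fm (Fd b) b := by
  have hid : HasDerivAt (fun x : ℝ => 2*x) 2 b := by
    simpa using (hasDerivAt_id b).const_mul 2
  have h1 : HasDerivAt (fun x => Real.cos (2*x)) (-2*Real.sin (2*b)) b := by
    have := hid.cos; convert this using 1; ring
  have h2 : HasDerivAt (fun x => Real.sin (2*x)) (2*Real.cos (2*b)) b := by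
    have := hid.sin; convert this using 1; ring
  have h3 : HasDerivAt (fun x => Real.sin x + Real.cos x) (Real.cos b - Real.sin b) b := by
    exact ((Real.hasDerivAt_sin b).add (Real.hasDerivAt_cos b)).congr_deriv (by ring)
  have := (h1.add h2).add ((hasDerivAt_Hfun hb).mul h3)
  refine this.congr_deriv ?_
  rw [Fd]; ring

open Filter in
lemma continuousAt_Fd {b : ℝ} (hb : b ∈ Set.Ioo (-(π/2)) (π/2)) : ContinuousAt Fd b := by
  have hHd : ContinuousAt Hd b := by
    rcases lt_trichotomy b 0 with h | h | h
    · refine Filter.EventuallyEq.continuousAt (y := 0) ?_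
      filter_upwards [Iio_mem_nhds h] with x hx; exact if_pos hx.le
    · subst h
      have h0 : Hd 0 = 0 := if_pos le_rfl
      rw [ContinuousAt, h0]
      nth_rewrite 1 [← nhdsLE_sup_nhdsGT (a := (0:ℝ))]
      rw [tendsto_sup]
      constructor
      · refine Tendsto.congr' ?_ tendsto_const_nhds
        filter_upwards [self_mem_nhdsWithin] with x (hx : x ≤ 0)
        exact (if_pos hx).symm
      · have key : Tendsto (fun x => 4 * Real.cos x *
            (Real.sin x * Real.log (1 + Real.cos x) - Real.sin x * Real.log (Real.sin x))
            - 2 * Real.sin x) (nhdsWithin 0 (Set.Ioi 0)) (nhds 0) := by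
          have t2 := tendsto_sin_log_one_cos.mono_left (nhdsWithin_le_nhds (s := Set.Ioi (0:ℝ)))
          have t3 := tendsto_sin_log_sin.mono_left (nhdsWithin_le_nhds (s := Set.Ioi (0:ℝ)))
          have tc : Tendsto (fun x => 4 * Real.cos x) (nhdsWithin (0:ℝ) (Set.Ioi 0)) (nhds 4) := by
            have : ContinuousAt (fun x => 4 * Real.cos x) 0 :=
              (continuous_const.mul Real.continuous_cos).continuousAt
            simpa using this.tendsto.mono_left nhdsWithin_le_nhds
          have ts : Tendsto (fun x => 2 * Real.sin x) (nhdsWithin (0:ℝ) (Set.Ioi 0)) (nhds 0) := by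
            have : ContinuousAt (fun x => 2 * Real.sin x) 0 :=
              (continuous_const.mul Real.continuous_sin).continuousAt
            simpa using this.tendsto.mono_left nhdsWithin_le_nhds
          simpa using (tc.mul (t2.sub t3)).sub ts
        refine key.congr' ?_
        filter_upwards [self_mem_nhdsWithin,
          nhdsWithin_le_nhds (Iio_mem_nhds (by positivity : (0:ℝ) < π/2))] with x hx hx2
        rw [Hd_eq hx hx2]; ring
    · have hs : 0 < Real.sin b :=
        Real.sin_pos_of_pos_of_lt_pi h (hb.2.trans (half_lt_self Real.pi_pos))
      have hc : 0 < Real.cos b := Real.cos_pos_of_mem_Ioo ⟨by linarith [Real.pi_pos], hb.2⟩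
      have hcont : ContinuousAt (fun x => 4*Real.sin x*Real.cos x*
          (Real.log (1+Real.cos x) - Real.log (Real.sin x)) - 2*Real.sin x) b := by
        refine ContinuousAt.sub (ContinuousAt.mul ?_ (ContinuousAt.sub ?_ ?_)) ?_
        · fun_prop
        · exact ContinuousAt.log (by fun_prop) (by positivity)
        · exact ContinuousAt.log (by fun_prop) (ne_of_gt hs)
        · fun_prop
      refine hcont.congr ?_
      filter_upwards [isOpen_Ioo.mem_nhds (⟨h, hb.2⟩ : b ∈ Set.Ioo 0 (π/2))] with x hx
      rw [Hd_eq hx.1 hx.2]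
  have hHfun : ContinuousAt Hfun b := (hasDerivAt_Hfun hb).continuousAt
  unfold Fd
  refine ContinuousAt.add (ContinuousAt.add (ContinuousAt.add ?_ ?_) (hHd.mul (by fun_prop)))
    (hHfun.mul (by fun_prop))
  · fun_prop
  · fun_prop

lemma Fd_zero : Fd 0 = 2 := by
  simp [Fd, Hd, Hfun]

lemma Fm_zero : Fm 0 = 1 := by
  simp [Fm, Hfun]

/-! ### Local inverse -/

noncomputable def ee : ℝ ≃L[ℝ] ℝ :=
  ContinuousLinearEquiv.unitsEquivAut ℝ (Units.mk0 (2:ℝ) two_ne_zero)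

lemma hpi2 : (0:ℝ) ∈ Set.Ioo (-(π/2)) (π/2) := by
  constructor <;> [linarith [Real.pi_pos]; positivity]

lemma contDiffAt_Fm : ContDiffAt ℝ 1 Fm 0 := by
  rw [contDiffAt_one_iff]
  refine ⟨fun b => ContinuousLinearMap.smulRight (1 : ℝ →L[ℝ] ℝ) (Fd b),
    Set.Ioo (-(π/2)) (π/2), isOpen_Ioo.mem_nhds hpi2, ?_,
    fun x hx => (hasDerivAt_Fm hx).hasFDerivAt⟩
  have : Continuous fun c : ℝ => ContinuousLinearMap.smulRight (1 : ℝ →L[ℝ] ℝ) c := by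
    have : (fun c : ℝ => ContinuousLinearMap.smulRight (1 : ℝ →L[ℝ] ℝ) c)
        = fun c : ℝ => c • ContinuousLinearMap.smulRight (1 : ℝ →L[ℝ] ℝ) (1:ℝ) := by
      ext c x; simp [mul_comm]
    rw [this]; exact (continuous_id.smul continuous_const)
  exact this.comp_continuousOn (fun x hx => (continuousAt_Fd hx).continuousWithinAt)

lemma hFmE : HasFDerivAt Fm (ee : ℝ →L[ℝ] ℝ) 0 := by
  have h : (ee : ℝ →L[ℝ] ℝ) = ContinuousLinearMap.smulRight (1 : ℝ →L[ℝ] ℝ) (2:ℝ) := by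
    ext x; simp [ee, ContinuousLinearEquiv.unitsEquivAut]
  rw [h]
  exact (Fd_zero ▸ hasDerivAt_Fm hpi2).hasFDerivAt

noncomputable def gi : ℝ → ℝ := contDiffAt_Fm.localInverse hFmE one_ne_zero

lemma hsf : HasStrictFDerivAt Fm (ee : ℝ →L[ℝ] ℝ) 0 := contDiffAt_Fm.hasStrictFDerivAt' hFmE one_ne_zero

lemma gi_eq : gi = hsf.localInverse Fm ee 0 := rfl

lemma gi_left : ∀ᶠ x in nhds 0, gi (Fm x) = x := gi_eq ▸ hsf.eventually_left_inverse
lemma gi_right : ∀ᶠ y in nhds 1, Fm (gi y) = y := by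
  have := hsf.eventually_right_inverse; rw [← gi_eq, Fm_zero] at this; exact this
lemma gi_cont : ContinuousAt gi 1 := by
  have := hsf.localInverse_continuousAt; rw [← gi_eq, Fm_zero] at this; exact this
lemma gi_one : gi 1 = 0 := by
  have := hsf.localInverse_apply_image; rw [← gi_eq, Fm_zero] at this; exact this
lemma gi_cd : ContDiffAt ℝ 1 gi 1 := by
  have := contDiffAt_Fm.to_localInverse hFmE one_ne_zero
  rw [Fm_zero] at this; exact this
lemma hFm_strict : HasStrictDerivAt Fm 2 0 := by
  have h := contDiffAt_Fm.hasStrictDerivAt one_ne_zero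
  have : deriv Fm 0 = 2 := by rw [(hasDerivAt_Fm hpi2).deriv, Fd_zero]
  rwa [this] at h
lemma gi_strict : HasStrictDerivAt gi 2⁻¹ 1 := by
  have := hFm_strict.to_local_left_inverse two_ne_zero gi_left
  rwa [Fm_zero] at this

/-! ### Elementary trigonometric bounds -/

lemma sin_lt_cos' {x : ℝ} (h0 : 0 ≤ x) (h : x < π/4) : Real.sin x < Real.cos x := by
  rw [← Real.sin_pi_div_two_sub]
  have hpi := Real.pi_pos
  apply Real.strictMonoOn_sin ⟨by linarith, by linarith⟩ ⟨by linarith, by linarith⟩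
  linarith

lemma sc_pos {x : ℝ} (hx : |x| < π/4) : 0 < Real.sin x + Real.cos x := by
  have hpi := Real.pi_pos
  rcases le_or_gt 0 x with h | h
  · have h1 : Real.sin x ≥ 0 := Real.sin_nonneg_of_nonneg_of_le_pi h
      (by rw [abs_of_nonneg h] at hx; linarith)
    have h2 : 0 < Real.cos x := Real.cos_pos_of_mem_Ioo
      ⟨by rw [abs_of_nonneg h] at hx; linarith, by rw [abs_of_nonneg h] at hx; linarith⟩
    linarith
  · rw [abs_of_neg h] at hx
    have := sin_lt_cos' (by linarith : (0:ℝ) ≤ -x) (by linarith)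
    rw [Real.sin_neg, Real.cos_neg] at this
    linarith

/-- `G(1,1,0) = 0`, and there are `ε > 0` and `C¹` functions `r₁, β : (1−ε, 1] → ℝ`
(with one-sided derivatives at `1`) such that `r₁(1) = 1`, `β(1) = 0`, and for every
`r ∈ (1−ε, 1)` one has `0 < r₁(r) < 1`, `0 < β(r) < π/2` and `G(r, r₁(r), β(r)) = 0`;
moreover `r₁'(1) = 1` and `β'(1) = −1/2`. -/
theorem implicit_solution_of_matching :
    Gmatch 1 1 0 = 0 ∧
    ∃ ε : ℝ, 0 < ε ∧
      ∃ r₁ β : ℝ → ℝ,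
        ContDiffOn ℝ 1 r₁ (Set.Ioc (1 - ε) 1) ∧
        ContDiffOn ℝ 1 β (Set.Ioc (1 - ε) 1) ∧
        r₁ 1 = 1 ∧ β 1 = 0 ∧
        (∀ r ∈ Set.Ioo (1 - ε) 1,
          0 < r₁ r ∧ r₁ r < 1 ∧ 0 < β r ∧ β r < π / 2 ∧ Gmatch r (r₁ r) (β r) = 0) ∧
        HasDerivWithinAt r₁ 1 (Set.Ioc (1 - ε) 1) 1 ∧
        HasDerivWithinAt β (-(1 / 2)) (Set.Ioc (1 - ε) 1) 1 := by
  have hpi := Real.pi_pos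
  constructor
  · rw [Gmatch, if_pos rfl]
    norm_num [Prod.ext_iff]
  -- choose δ
  have hFd_pos : ∀ᶠ x in nhds (0:ℝ), 0 < Fd x ∧ x ∈ Set.Ioo (-(π/2)) (π/2) := by
    have h1 : ∀ᶠ x in nhds (0:ℝ), 0 < Fd x := by
      have := (continuousAt_Fd hpi2).tendsto
      rw [Fd_zero] at this
      exact this.eventually (eventually_gt_nhds (by norm_num))
    exact h1.and (isOpen_Ioo.eventually_mem hpi2)
  obtain ⟨δ₀, hδ₀, hδ₀'⟩ := Metric.eventually_nhds_iff.1 hFd_pos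
  set δ := min (δ₀/2) (π/8) with hδdef
  have hδpos : 0 < δ := lt_min (by linarith) (by positivity)
  have hδlt : δ < π/4 := lt_of_le_of_lt (min_le_right _ _) (by linarith)
  have hδsub : Set.Ioo (-δ) δ ⊆ Set.Ioo (-(π/2)) (π/2) := by
    intro x hx
    have h1 : δ ≤ π/8 := min_le_right _ _
    constructor <;> [nlinarith [hx.1]; nlinarith [hx.2]]
  have hgood : ∀ x ∈ Set.Ioo (-δ) δ, 0 < Fd x := by
    intro x hx
    refine (hδ₀' ?_).1
    rw [Real.dist_eq, sub_zero, abs_lt]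
    have h1 : δ ≤ δ₀/2 := min_le_left _ _
    constructor <;> [nlinarith [hx.1]; nlinarith [hx.2]]
  have hmono : StrictMonoOn Fm (Set.Ioo (-δ) δ) := by
    refine strictMonoOn_of_deriv_pos (convex_Ioo _ _)
      (fun x hx => (hasDerivAt_Fm (hδsub hx)).continuousAt.continuousWithinAt) ?_
    rw [interior_Ioo]
    intro x hx
    rw [(hasDerivAt_Fm (hδsub hx)).deriv]
    exact hgood x hx
  obtain ⟨u, hu, hucd⟩ := gi_cd.contDiffOn le_rfl (by simp)
  have h0mem : (0:ℝ) ∈ Set.Ioo (-δ) δ := ⟨by linarith, by linarith⟩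
  have hgiδ : ∀ᶠ y in nhds (1:ℝ), gi y ∈ Set.Ioo (-δ) δ := by
    have h := gi_cont.tendsto
    rw [gi_one] at h
    exact h.eventually (isOpen_Ioo.eventually_mem h0mem)
  have hu' : ∀ᶠ y in nhds (1:ℝ), y ∈ u := hu
  have hev : ∀ᶠ y in nhds (1:ℝ), Fm (gi y) = y ∧ gi y ∈ Set.Ioo (-δ) δ ∧ y ∈ u :=
    gi_right.and (hgiδ.and hu')
  have hinv : Filter.Tendsto (fun r : ℝ => r⁻¹) (nhds 1) (nhds 1) := by
    have := (continuousAt_inv₀ (one_ne_zero : (1:ℝ) ≠ 0)).tendsto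
    rwa [inv_one] at this
  have hevr : ∀ᶠ r in nhds (1:ℝ),
      (Fm (gi r⁻¹) = r⁻¹ ∧ gi r⁻¹ ∈ Set.Ioo (-δ) δ ∧ r⁻¹ ∈ u) ∧
        r ∈ Set.Ioo (1/2 : ℝ) (3/2) :=
    (hinv.eventually hev).and (isOpen_Ioo.eventually_mem (by norm_num))
  obtain ⟨ε, hε, hball⟩ := Metric.eventually_nhds_iff.1 hevr
  have hS : ∀ r ∈ Set.Ioc (1-ε) 1,
      (Fm (gi r⁻¹) = r⁻¹ ∧ gi r⁻¹ ∈ Set.Ioo (-δ) δ ∧ r⁻¹ ∈ u) ∧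
        r ∈ Set.Ioo (1/2 : ℝ) (3/2) := by
    intro r hr
    refine hball ?_
    rw [Real.dist_eq, abs_lt]
    constructor <;> [linarith [hr.1]; linarith [hr.2, hε]]
  -- basic consequences
  have habs : ∀ r ∈ Set.Ioc (1-ε) 1, |gi r⁻¹| < π/4 := by
    intro r hr
    have h := (hS r hr).1.2.1
    rw [abs_lt]
    constructor <;> [nlinarith [h.1]; nlinarith [h.2]]
  have hden : ∀ r ∈ Set.Ioc (1-ε) 1, Real.sin (gi r⁻¹) + Real.cos (gi r⁻¹) ≠ 0 :=
    fun r hr => ne_of_gt (sc_pos (habs r hr))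
  -- smoothness of β
  have hβcd : ContDiffOn ℝ 1 (fun r => gi r⁻¹) (Set.Ioc (1-ε) 1) := by
    refine hucd.comp ((contDiffOn_inv (𝕜 := ℝ)).mono ?_) ?_
    · intro r hr
      have := (hS r hr).2.1
      simp only [Set.mem_compl_iff, Set.mem_singleton_iff]
      intro h; rw [h] at this; norm_num at this
    · intro r hr
      exact (hS r hr).1.2.2
  have hgi1 : gi (1:ℝ)⁻¹ = 0 := by rw [inv_one, gi_one]
  refine ⟨ε, hε,
    fun r => (Real.cos (gi r⁻¹) - r * Real.sin (gi r⁻¹)) /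
      (Real.sin (gi r⁻¹) + Real.cos (gi r⁻¹)),
    fun r => gi r⁻¹, ?_, hβcd, ?_, ?_, ?_, ?_, ?_⟩
  · exact ContDiffOn.div (hβcd.cos.sub (contDiffOn_id.mul hβcd.sin))
      (hβcd.sin.add hβcd.cos) hden
  · norm_num [gi_one]
  · norm_num [gi_one]
  · -- main pointwise facts
    intro r hr
    have hrS : r ∈ Set.Ioc (1-ε) 1 := ⟨hr.1, hr.2.le⟩
    obtain ⟨⟨hFm, hδmem, -⟩, hr12⟩ := hS r hrS
    have hr0 : 0 < r := by linarith [hr12.1]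
    have hr1 : r < 1 := hr.2
    have hy : 1 < r⁻¹ := by
      rw [lt_inv_comm₀] <;> norm_num [hr0, hr1]
    set b := gi r⁻¹ with hbdef
    have hbpos : 0 < b := by
      rcases lt_trichotomy b 0 with h | h | h
      · have := hmono hδmem h0mem h
        rw [Fm_zero, hFm] at this
        linarith
      · exfalso
        rw [h, Fm_zero] at hFm
        linarith
      · exact h
    have hb4 : b < π/4 := lt_of_abs_lt (habs r hrS)
    have hb2 : b < π/2 := by linarith
    have hsb : 0 < Real.sin b := Real.sin_pos_of_pos_of_lt_pi hbpos (by linarith)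
    have hcb : 0 < Real.cos b := Real.cos_pos_of_mem_Ioo ⟨by linarith, hb2⟩
    have hcs : Real.sin b < Real.cos b := sin_lt_cos' hbpos.le hb4
    have hd : 0 < Real.sin b + Real.cos b := by linarith
    refine ⟨?_, ?_, hbpos, hb2, ?_⟩
    · apply div_pos ?_ hd
      nlinarith
    · rw [div_lt_one hd]
      nlinarith
    · -- Gmatch vanishes
      rw [Gmatch, if_neg (ne_of_gt hbpos)]
      have key : r * ((2*Real.cos b^2 - 1) + 2*Real.sin b*Real.cos b
          + (2 * Real.sin b ^ 2 * _root_.arcosh (1 / Real.sin b)) * (Real.sin b + Real.cos b)) = 1 := by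
        have h1 : r * Fm b = 1 := by rw [hFm]; field_simp
        rw [Fm] at h1
        rw [← Real.cos_two_mul, ← Real.sin_two_mul, ← show Hfun b = _ from if_neg (not_le.2 hbpos)]
        exact h1
      have hpy := Real.sin_sq_add_cos_sq b
      have hr₁ : (Real.cos b - r * Real.sin b) / (Real.sin b + Real.cos b)
          * (Real.sin b + Real.cos b) = Real.cos b - r * Real.sin b :=
        div_mul_cancel₀ _ (ne_of_gt hd)
      rw [Prod.ext_iff]
      constructor
      · simp only [Prod.fst_zero]
        refine mul_right_cancel₀ (b := Real.sin b + Real.cos b) (ne_of_gt hd) ?_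
        rw [zero_mul]
        linear_combination key + (Real.sin b - Real.cos b) * hr₁ + (-1 - r) * hpy
      · simp only [Prod.snd_zero]
        refine mul_right_cancel₀ (b := Real.sin b + Real.cos b) (ne_of_gt hd) ?_
        rw [zero_mul]
        linear_combination (Real.sin b + Real.cos b) * hr₁
  · -- derivative of r₁ at 1
    have h1 : HasDerivAt (fun r:ℝ => r⁻¹) (-1) 1 := by
      have := hasDerivAt_inv (one_ne_zero (α := ℝ))
      norm_num at this
      exact this
    have h2 : HasDerivAt gi 2⁻¹ ((1:ℝ)⁻¹) := by rw [inv_one]; exact gi_strict.hasDerivAt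
    have hβd : HasDerivAt (fun r => gi r⁻¹) (-(1/2)) 1 := by
      have := h2.comp 1 h1
      exact this.congr_deriv (by norm_num)
    have hcd' : HasDerivAt (fun r => Real.cos (gi r⁻¹)) 0 1 := by
      have := hβd.cos
      norm_num [gi_one] at this
      exact this
    have hsd' : HasDerivAt (fun r => Real.sin (gi r⁻¹)) (-(1/2)) 1 := by
      have := hβd.sin
      norm_num [gi_one] at this
      exact this
    have hnum : HasDerivAt (fun r => Real.cos (gi r⁻¹) - r * Real.sin (gi r⁻¹))
        (2⁻¹) 1 := by
      have := hcd'.sub ((hasDerivAt_id 1).mul hsd')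
      refine this.congr_deriv ?_
      norm_num [gi_one]
    have hdend : HasDerivAt (fun r => Real.sin (gi r⁻¹) + Real.cos (gi r⁻¹)) (-(1/2)) 1 := by
      exact (hsd'.add hcd').congr_deriv (by norm_num)
    have hdiv := hnum.div hdend (by norm_num [gi_one])
    refine HasDerivAt.hasDerivWithinAt ?_
    refine hdiv.congr_deriv ?_
    norm_num [gi_one]
  · -- derivative of β at 1
    have h1 : HasDerivAt (fun r:ℝ => r⁻¹) (-1) 1 := by
      have := hasDerivAt_inv (one_ne_zero (α := ℝ))
      norm_num at this
      exact this
    have h2 : HasDerivAt gi 2⁻¹ ((1:ℝ)⁻¹) := by rw [inv_one]; exact gi_strict.hasDerivAt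
    have := h2.comp 1 h1
    refine HasDerivAt.hasDerivWithinAt ?_
    exact this.congr_deriv (by norm_num)
end

section
/- Let ε > 0 and let r₁, β : (1−ε, 1] → ℝ be C¹ functions (with one-sided derivatives at 1) satisfying r₁(1) = 1, β(1) = 0, r₁'(1) = 1, β'(1) = −1/2, and 0 < β(r) < π/2 for r ∈ (1−ε, 1). Define A : (1−ε, 1] → ℝ by A(r) = 2π [ (1 − r₁(r)²) sin β(r) + r₁(r)(1 − r₁(r)) (π/2) cos β(r) + (r₁(r)² + r²) cos β(r) + r² sin²β(r) cos β(r) + r² sin⁴β(r) · arcosh(1/ sin β(r)) ], where the last term is interpreted as 0 when β(r) = 0. Then A(1) = 4π, A is differentiable at r = 1 (one-sided), and A'(1) > 0. -/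
open Real

/-- If `r₁, β : (1−ε, 1] → ℝ` are `C¹` with `r₁(1) = 1`, `β(1) = 0`, `r₁'(1) = 1`,
`β'(1) = −1/2` (one-sided derivatives at `1`) and `0 < β(r) < π/2` on `(1−ε, 1)`, then the
total area function
`A(r) = 2π[(1 − r₁²) sin β + r₁(1 − r₁)(π/2) cos β + (r₁² + r²) cos β + r² sin²β cos β
 + r² sin⁴β arcosh(1/sin β)]`
satisfies `A(1) = 4π`, is one-sidedly differentiable at `r = 1`, and `A'(1) > 0`. -/
theorem area_of_neck_construction (ε : ℝ) (hε : 0 < ε) (r₁ β : ℝ → ℝ)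
    (hr₁ : ContDiffOn ℝ 1 r₁ (Set.Ioc (1 - ε) 1))
    (hβ : ContDiffOn ℝ 1 β (Set.Ioc (1 - ε) 1))
    (hr₁1 : r₁ 1 = 1) (hβ1 : β 1 = 0)
    (hr₁' : HasDerivWithinAt r₁ 1 (Set.Ioc (1 - ε) 1) 1)
    (hβ' : HasDerivWithinAt β (-(1 / 2)) (Set.Ioc (1 - ε) 1) 1)
    (hβrange : ∀ r ∈ Set.Ioo (1 - ε) 1, 0 < β r ∧ β r < π / 2)
    (A : ℝ → ℝ)
    (hA : ∀ r ∈ Set.Ioc (1 - ε) 1,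
      A r = 2 * π *
        ((1 - r₁ r ^ 2) * Real.sin (β r)
          + r₁ r * (1 - r₁ r) * (π / 2) * Real.cos (β r)
          + (r₁ r ^ 2 + r ^ 2) * Real.cos (β r)
          + r ^ 2 * Real.sin (β r) ^ 2 * Real.cos (β r)
          + r ^ 2 * Real.sin (β r) ^ 4 * _root_.arcosh (1 / Real.sin (β r)))) :
    A 1 = 4 * π ∧
    ∃ A' : ℝ, HasDerivWithinAt A A' (Set.Ioc (1 - ε) 1) 1 ∧ 0 < A' := by
  set s : Set ℝ := Set.Ioc (1 - ε) 1 with hs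
  have h1mem : (1:ℝ) ∈ s := ⟨by linarith, le_refl 1⟩
  have hsin1 : Real.sin (β 1) = 0 := by rw [hβ1]; simp
  have hcos1 : Real.cos (β 1) = 1 := by rw [hβ1]; simp
  -- value at 1
  have hA1 : A 1 = 4 * π := by
    rw [hA 1 h1mem, hsin1, hcos1, hr₁1]
    ring
  refine ⟨hA1, ?_⟩
  -- derivatives of the elementary pieces
  have Hsin : HasDerivWithinAt (fun r => Real.sin (β r)) (-(1/2)) s 1 := by
    have := (Real.hasDerivAt_sin (β 1)).comp_hasDerivWithinAt 1 hβ'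
    simpa [hcos1, Function.comp_def] using this
  have Hcos : HasDerivWithinAt (fun r => Real.cos (β r)) 0 s 1 := by
    have := (Real.hasDerivAt_cos (β 1)).comp_hasDerivWithinAt 1 hβ'
    simpa [hsin1, Function.comp_def] using this
  have Hid : HasDerivWithinAt (fun r : ℝ => r) 1 s 1 := hasDerivWithinAt_id 1 s
  have Hr2 : HasDerivWithinAt (fun r : ℝ => r ^ 2) 2 s 1 := by
    simpa [Pi.pow_def] using Hid.pow 2
  have Hr₁2 : HasDerivWithinAt (fun r => r₁ r ^ 2) 2 s 1 := by
    simpa [hr₁1, Pi.pow_def] using hr₁'.pow 2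
  -- the arcosh term has one-sided derivative 0
  have Hh : HasDerivWithinAt
      (fun r => r ^ 2 * Real.sin (β r) ^ 4 * _root_.arcosh (1 / Real.sin (β r))) 0 s 1 := by
    rw [hasDerivWithinAt_iff_tendsto_slope]
    have hdiff : s \ {1} = Set.Ioo (1 - ε) 1 := Set.Ioc_sdiff_right
    rw [hdiff]
    have hβt : Filter.Tendsto (slope β 1) (nhdsWithin 1 (Set.Ioo (1 - ε) 1)) (nhds (-(1/2))) := by
      have := hasDerivWithinAt_iff_tendsto_slope.mp hβ'
      rwa [hdiff] at this
    have hev1 : ∀ᶠ r in nhdsWithin 1 (Set.Ioo (1 - ε) 1), |slope β 1 r| < 1 :=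
      hβt.abs.eventually_lt_const (show |(-(1/2):ℝ)| < 1 by rw [abs_neg, abs_of_nonneg (by norm_num : (0:ℝ) ≤ 1/2)]; norm_num)
    have hev2 : ∀ᶠ r in nhdsWithin 1 (Set.Ioo (1 - ε) 1), r ∈ Set.Ioo (1 - ε) 1 :=
      eventually_mem_nhdsWithin
    have hev3 : ∀ᶠ r in nhdsWithin 1 (Set.Ioo (1 - ε) 1), |r - 1| < 1 :=
      eventually_nhdsWithin_of_eventually_nhds (eventually_abs_sub_lt 1 one_pos)
    apply squeeze_zero_norm' (a := fun r => 2 * (1 - r) ^ 2)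
    · filter_upwards [hev1, hev2, hev3] with r h1 h2 h3
      obtain ⟨hβpos, hβlt⟩ := hβrange r h2
      have hr1 : r < 1 := h2.2
      have hr0 : 0 < r := by
        rcases abs_sub_lt_iff.mp h3 with ⟨_, h⟩; linarith
      have hsr : 0 < Real.sin (β r) :=
        Real.sin_pos_of_pos_of_lt_pi hβpos (by linarith [Real.pi_pos])
      set u : ℝ := Real.sin (β r) with hu
      have hu1 : u ≤ 1 := Real.sin_le_one _
      -- β r < 1 - r
      have hβsmall : β r < 1 - r := by
        have : |slope β 1 r| = β r / (1 - r) := by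
          rw [slope_def_field, hβ1, sub_zero, abs_div, abs_of_pos hβpos,
            abs_of_neg (by linarith : r - 1 < 0), neg_sub]
        rw [this] at h1
        have h1r : (0:ℝ) < 1 - r := by linarith
        calc β r = (β r / (1 - r)) * (1 - r) := by field_simp
        _ < 1 * (1 - r) := by apply mul_lt_mul_of_pos_right h1 h1r
        _ = 1 - r := by ring
      have husmall : u ≤ 1 - r := le_trans (Real.sin_le hβpos.le) hβsmall.le
      -- arcosh bound
      have harcosh_nonneg : 0 ≤ _root_.arcosh (1 / u) := by
        apply Real.log_nonneg
        have : (1:ℝ) ≤ 1 / u := by rw [le_div_iff₀ hsr]; linarith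
        nlinarith [Real.sqrt_nonneg ((1/u)^2 - 1)]
      have harcosh_le : _root_.arcosh (1 / u) ≤ 2 / u := by
        have hsqrt : Real.sqrt ((1/u)^2 - 1) ≤ 1 / u := by
          calc Real.sqrt ((1/u)^2 - 1) ≤ Real.sqrt ((1/u)^2) :=
              Real.sqrt_le_sqrt (by linarith)
          _ = 1 / u := Real.sqrt_sq (by positivity)
        calc _root_.arcosh (1/u) = Real.log (1/u + Real.sqrt ((1/u)^2 - 1)) := rfl
        _ ≤ (1/u + Real.sqrt ((1/u)^2 - 1)) := Real.log_le_self (by positivity)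
        _ ≤ 1/u + 1/u := by linarith
        _ = 2 / u := by ring
      -- the main bound
      have hval : (1:ℝ) ^ 2 * Real.sin (β 1) ^ 4 * _root_.arcosh (1 / Real.sin (β 1)) = 0 := by
        simp [hsin1, _root_.arcosh]
      have hterm_nonneg : 0 ≤ r ^ 2 * u ^ 4 * _root_.arcosh (1 / u) := by positivity
      have hterm_le : r ^ 2 * u ^ 4 * _root_.arcosh (1 / u) ≤ 2 * (1 - r) ^ 3 := by
        have h1 : r ^ 2 * u ^ 4 * _root_.arcosh (1 / u) ≤ 1 * u ^ 4 * (2 / u) := by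
          apply mul_le_mul
          · apply mul_le_mul_of_nonneg_right _ (by positivity)
            nlinarith
          · exact harcosh_le
          · exact harcosh_nonneg
          · positivity
        have h2 : 1 * u ^ 4 * (2 / u) = 2 * u ^ 3 := by field_simp
        have h3 : 2 * u ^ 3 ≤ 2 * (1 - r) ^ 3 := by
          have : u ^ 3 ≤ (1 - r) ^ 3 := by
            apply pow_le_pow_left₀ hsr.le husmall
          linarith
        linarith
      rw [slope_def_field]
      simp only [← hu]
      rw [hval, sub_zero, Real.norm_eq_abs, abs_div]
      rw [abs_of_nonneg hterm_nonneg, abs_of_neg (by linarith : r - 1 < 0)]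
      rw [div_le_iff₀ (by linarith : (0:ℝ) < -(r - 1))]
      calc r ^ 2 * u ^ 4 * _root_.arcosh (1 / u) ≤ 2 * (1 - r) ^ 3 := hterm_le
      _ = 2 * (1 - r) ^ 2 * (-(r - 1)) := by ring
    · have : Filter.Tendsto (fun r : ℝ => 2 * (1 - r) ^ 2) (nhds 1) (nhds 0) := by
        have hc : Continuous (fun r : ℝ => 2 * (1 - r) ^ 2) := by continuity
        have := hc.tendsto 1
        simpa using this
      exact this.mono_left nhdsWithin_le_nhds
  -- derivative of the smooth part
  have T1 : HasDerivWithinAt (fun r => (1 - r₁ r ^ 2) * Real.sin (β r)) 0 s 1 := by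
    have := (Hr₁2.const_sub 1).mul Hsin
    simpa [hr₁1, hsin1, Pi.mul_def] using this
  have T2 : HasDerivWithinAt (fun r => r₁ r * (1 - r₁ r) * (π/2) * Real.cos (β r)) (-(π/2)) s 1 := by
    have := (((hr₁'.mul (hr₁'.const_sub 1)).mul_const (π/2)).mul Hcos)
    have e : (1 * (1 - r₁ 1) + r₁ 1 * -1) * (π / 2) * Real.cos (β 1)
        + r₁ 1 * (1 - r₁ 1) * (π / 2) * 0 = -(π/2) := by
      rw [hr₁1, hcos1]; ring
    simp only [Pi.mul_def] at this
    rw [e] at this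
    exact this
  have T3 : HasDerivWithinAt (fun r => (r₁ r ^ 2 + r ^ 2) * Real.cos (β r)) 4 s 1 := by
    have := (Hr₁2.add Hr2).mul Hcos
    have e : (2 + 2) * Real.cos (β 1) + (r₁ 1 ^ 2 + 1 ^ 2) * 0 = 4 := by
      rw [hcos1]; ring
    simp only [Pi.mul_def, Pi.add_apply] at this
    rw [e] at this
    exact this
  have T4 : HasDerivWithinAt (fun r => r ^ 2 * Real.sin (β r) ^ 2 * Real.cos (β r)) 0 s 1 := by
    have := (Hr2.mul (Hsin.pow 2)).mul Hcos
    simp only [Pi.mul_def, Pi.pow_def] at this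
    have e : (2 * Real.sin (β 1) ^ 2 + 1 ^ 2 * ((2:ℕ) * Real.sin (β 1) ^ (2 - 1) * -(1 / 2))) * Real.cos (β 1)
        + 1 ^ 2 * Real.sin (β 1) ^ 2 * 0 = 0 := by
      rw [hsin1]; norm_num
    rw [e] at this
    exact this
  have HF : HasDerivWithinAt (fun r =>
      2 * π * ((1 - r₁ r ^ 2) * Real.sin (β r)
        + r₁ r * (1 - r₁ r) * (π/2) * Real.cos (β r)
        + (r₁ r ^ 2 + r ^ 2) * Real.cos (β r)
        + r ^ 2 * Real.sin (β r) ^ 2 * Real.cos (β r)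
        + r ^ 2 * Real.sin (β r) ^ 4 * _root_.arcosh (1 / Real.sin (β r))))
      (2 * π * (4 - π/2)) s 1 := by
    have := ((((T1.add T2).add T3).add T4).add Hh).const_mul (2 * π)
    have e : 2 * π * (0 + -(π/2) + 4 + 0 + 0) = 2 * π * (4 - π/2) := by ring
    rw [e] at this
    exact this
  refine ⟨2 * π * (4 - π/2), ?_, ?_⟩
  · exact HF.congr (fun r hr => hA r hr) (hA 1 h1mem)
  · nlinarith [Real.pi_pos, Real.pi_lt_d2]
end

section
/- There is a universal constant c₀ > 0 with the following property. Let Q ⊂ ℝ² be a closed square of side length ℓ ∈ (0, 1], and let u : Q → ℝ² be of class C¹ with |u(y)| ≤ 1 for all y ∈ Q and |u(y)|² ≥ 1/5 for all y ∈ ∂Q. If ∫_Q |Du|² ≤ c₀ ℓ², then the Lebesgue measure of the set { y ∈ Q : |u(y)|² < 1/6 } is at most ℓ²/2. -/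
open MeasureTheory

open Set


noncomputable def sqMap (z : ℝ × ℝ) : EuclideanSpace ℝ (Fin 2) :=
  (WithLp.equiv 2 (Fin 2 → ℝ)).symm ![z.1, z.2]

lemma sqMap_apply_zero (z : ℝ × ℝ) : sqMap z 0 = z.1 := rfl
lemma sqMap_apply_one (z : ℝ × ℝ) : sqMap z 1 = z.2 := rfl

noncomputable def eqv : EuclideanSpace ℝ (Fin 2) ≃ᵐ (ℝ × ℝ) :=
  (MeasurableEquiv.toLp 2 (Fin 2 → ℝ)).symm.trans (MeasurableEquiv.finTwoArrow)

lemma eqv_apply (y : EuclideanSpace ℝ (Fin 2)) : eqv y = (y 0, y 1) := rfl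

lemma sqMap_eqv (y : EuclideanSpace ℝ (Fin 2)) : sqMap (eqv y) = y := by
  ext i
  fin_cases i <;> rfl

lemma eqv_preserving : MeasurePreserving eqv volume volume :=
  (volume_preserving_finTwoArrow ℝ).comp (EuclideanSpace.volume_preserving_symm_measurableEquiv_toLp (Fin 2))

lemma sqMap_continuous : Continuous sqMap := by
  apply PiLp.continuous_toLp _ _ |>.comp
  apply continuous_pi
  intro i
  fin_cases i
  · simpa using continuous_fst
  · simpa using continuous_snd

variable (p : EuclideanSpace ℝ (Fin 2)) (ℓ : ℝ)

def Qset : Set (EuclideanSpace ℝ (Fin 2)) := {y | ∀ i, p i ≤ y i ∧ y i ≤ p i + ℓ}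

lemma coord_le_norm (v : EuclideanSpace ℝ (Fin 2)) (i : Fin 2) : |v i| ≤ ‖v‖ := by
  rw [EuclideanSpace.norm_eq, ← Real.sqrt_sq_eq_abs]
  apply Real.sqrt_le_sqrt
  have := Finset.single_le_sum (f := fun j => ‖v j‖ ^ 2) (fun j _ => by positivity)
    (Finset.mem_univ i)
  simpa [Real.norm_eq_abs, sq_abs] using this

lemma convex_Qset : Convex ℝ (Qset p ℓ) := by
  intro y hy z hz a b ha hb hab i
  have h1 := hy i; have h2 := hz i
  have he : (a • y + b • z) i = a * y i + b * z i := rfl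
  rw [he]
  have hp : a * p i + b * p i = p i := by rw [← add_mul, hab, one_mul]
  constructor
  · nlinarith [mul_nonneg ha (sub_nonneg.2 h1.1), mul_nonneg hb (sub_nonneg.2 h2.1)]
  · nlinarith [mul_nonneg ha (sub_nonneg.2 h1.2), mul_nonneg hb (sub_nonneg.2 h2.2)]

lemma isClosed_Qset : IsClosed (Qset p ℓ) := by
  have : Qset p ℓ = ⋂ i, ((fun y : EuclideanSpace ℝ (Fin 2) => y i) ⁻¹' Icc (p i) (p i + ℓ)) := by
    ext y; simp [Qset]
  rw [this]
  exact isClosed_iInter fun i =>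
    (isClosed_Icc).preimage ((continuous_apply i).comp (PiLp.continuous_ofLp 2 _))

lemma interior_nonempty (hl : 0 < ℓ) : (interior (Qset p ℓ)).Nonempty := by
  set c : EuclideanSpace ℝ (Fin 2) :=
    (WithLp.equiv 2 (Fin 2 → ℝ)).symm (fun i => p i + ℓ/2) with hc
  have hci : ∀ i, c i = p i + ℓ/2 := fun i => rfl
  refine ⟨c, ?_⟩
  rw [mem_interior]
  refine ⟨Metric.ball c (ℓ/2), ?_, Metric.isOpen_ball, Metric.mem_ball_self (by linarith)⟩
  intro y hy i
  have hd : |(c - y) i| ≤ dist y c := by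
    rw [dist_comm, dist_eq_norm]; exact coord_le_norm _ i
  have hcc : (c - y) i = p i + ℓ/2 - y i := by
    have : (c - y) i = c i - y i := rfl
    rw [this, hci]
  rw [hcc] at hd
  rw [Metric.mem_ball] at hy
  have habs := abs_le.1 (hd.trans hy.le)
  exact ⟨by linarith [habs.2], by linarith [habs.1]⟩

lemma uniqueDiffOn_Qset (hl : 0 < ℓ) : UniqueDiffOn ℝ (Qset p ℓ) :=
  uniqueDiffOn_convex (convex_Qset p ℓ) (interior_nonempty p ℓ hl)

lemma mem_frontier_Qset (hl : 0 < ℓ) {y : EuclideanSpace ℝ (Fin 2)} (hy : y ∈ Qset p ℓ)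
    (h1 : y 1 = p 1) : y ∈ frontier (Qset p ℓ) := by
  rw [(isClosed_Qset p ℓ).frontier_eq]
  refine ⟨hy, fun hmem => ?_⟩
  rw [mem_interior_iff_mem_nhds, Metric.mem_nhds_iff] at hmem
  obtain ⟨ε, hε, hball⟩ := hmem
  set y' : EuclideanSpace ℝ (Fin 2) := y - (ε/2) • EuclideanSpace.single 1 (1:ℝ) with hy'def
  have hy' : y' ∈ Qset p ℓ := by
    apply hball
    rw [Metric.mem_ball, dist_eq_norm]
    have h2 : y' - y = -((ε/2) • EuclideanSpace.single 1 (1:ℝ)) := by rw [hy'def]; abel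
    rw [h2, norm_neg, norm_smul, EuclideanSpace.norm_single]
    rw [norm_one, mul_one, Real.norm_eq_abs, abs_of_pos (by linarith)]
    linarith
  have hmem1 := (hy' 1).1
  have hcc : y' 1 = y 1 - ε/2 := by
    have h3 : y' 1 = y 1 - (ε/2) * (EuclideanSpace.single 1 (1:ℝ)) 1 := rfl
    rw [h3, EuclideanSpace.single_apply]
    simp
  rw [hcc, h1] at hmem1
  linarith

variable (u : EuclideanSpace ℝ (Fin 2) → EuclideanSpace ℝ (Fin 2))

lemma mem_Qset_sqMap {x t : ℝ} (hx : x ∈ Icc (p 0) (p 0 + ℓ)) (ht : t ∈ Icc (p 1) (p 1 + ℓ)) :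
    sqMap (x, t) ∈ Qset p ℓ := by
  intro i; fin_cases i
  · exact ⟨hx.1, hx.2⟩
  · exact ⟨ht.1, ht.2⟩

lemma sqMap_param (x t : ℝ) :
    sqMap (x, t) = sqMap (x, 0) + t • EuclideanSpace.single 1 (1:ℝ) := by
  set v : EuclideanSpace ℝ (Fin 2) := sqMap (x, 0) + t • EuclideanSpace.single 1 (1:ℝ) with hv
  refine PiLp.ext fun i => ?_
  have hvi : v i = sqMap (x, 0) i + t * (EuclideanSpace.single 1 (1:ℝ)) i := rfl
  show sqMap (x, t) i = v i
  rw [hvi]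
  fin_cases i <;> simp [sqMap, EuclideanSpace.single_apply]

lemma slice_lower_bound (hl : 0 < ℓ)
    (hcd : ContDiffOn ℝ 1 u (Qset p ℓ)) (hb1 : ∀ y ∈ Qset p ℓ, ‖u y‖ ≤ 1)
    (hbd : ∀ y ∈ frontier (Qset p ℓ), 1/5 ≤ ‖u y‖^2)
    {x : ℝ} (hx : x ∈ Icc (p 0) (p 0 + ℓ)) {t₀ : ℝ} (ht₀ : t₀ ∈ Icc (p 1) (p 1 + ℓ))
    (hsm : ‖u (sqMap (x, t₀))‖^2 < 1/6) :
    1/(3600*ℓ) ≤ ∫ t in Icc (p 1) (p 1 + ℓ),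
      ‖fderivWithin ℝ u (Qset p ℓ) (sqMap (x, t)) (EuclideanSpace.single 1 (1:ℝ))‖^2 := by
  have hQu : UniqueDiffOn ℝ (Qset p ℓ) := uniqueDiffOn_Qset p ℓ hl
  set e₁ : EuclideanSpace ℝ (Fin 2) := EuclideanSpace.single 1 (1:ℝ) with he₁
  set D : ℝ → (EuclideanSpace ℝ (Fin 2) →L[ℝ] EuclideanSpace ℝ (Fin 2)) :=
    fun t => fderivWithin ℝ u (Qset p ℓ) (sqMap (x, t)) with hD
  set w : ℝ → EuclideanSpace ℝ (Fin 2) := fun t => u (sqMap (x, t)) with hw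
  set g : ℝ → ℝ := fun t => ‖w t‖^2 with hg
  set h : ℝ → ℝ := fun t => 2 * ‖D t e₁‖ with hh
  set G : ℝ → ℝ := fun t => ∫ s in (p 1)..t, h s with hG
  have hbB : p 1 ≤ p 1 + ℓ := by linarith
  have hmapc : Continuous (fun t : ℝ => sqMap (x, t)) :=
    sqMap_continuous.comp (continuous_const.prodMk continuous_id)
  have hmaps : MapsTo (fun t : ℝ => sqMap (x, t)) (Icc (p 1) (p 1 + ℓ)) (Qset p ℓ) :=
    fun t ht => mem_Qset_sqMap p ℓ hx ht
  have hDQ : ContinuousOn (fderivWithin ℝ u (Qset p ℓ)) (Qset p ℓ) :=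
    hcd.continuousOn_fderivWithin hQu le_rfl
  have hDc : ContinuousOn D (Icc (p 1) (p 1 + ℓ)) := hDQ.comp hmapc.continuousOn hmaps
  have hDe : ContinuousOn (fun t => D t e₁) (Icc (p 1) (p 1 + ℓ)) :=
    hDc.clm_apply continuousOn_const
  have hhc : ContinuousOn h (Icc (p 1) (p 1 + ℓ)) := continuousOn_const.mul hDe.norm
  have hFc : ContinuousOn (fun t => ‖D t e₁‖^2) (Icc (p 1) (p 1 + ℓ)) := hDe.norm.pow 2
  have hwc : ContinuousOn w (Icc (p 1) (p 1 + ℓ)) :=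
    hcd.continuousOn.comp hmapc.continuousOn hmaps
  have hgc : ContinuousOn g (Icc (p 1) (p 1 + ℓ)) := (hwc.norm).pow 2
  -- derivative of g
  have hder : ∀ t ∈ Icc (p 1) (p 1 + ℓ),
      HasDerivWithinAt g (2 * (inner ℝ (w t) (D t e₁) : ℝ)) (Icc (p 1) (p 1 + ℓ)) t := by
    intro t ht
    have hu' : HasFDerivWithinAt u (D t) (Qset p ℓ) (sqMap (x, t)) :=
      ((hcd.differentiableOn one_ne_zero) _ (hmaps ht)).hasFDerivWithinAt
    have hφ : HasDerivWithinAt (fun t : ℝ => sqMap (x, t)) e₁ (Icc (p 1) (p 1 + ℓ)) t := by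
      have h1 : HasDerivAt (fun r : ℝ => sqMap (x, 0) + r • e₁) e₁ t := by
        simpa using ((hasDerivAt_id t).smul_const e₁).const_add (sqMap (x, 0))
      have h2 : (fun r : ℝ => sqMap (x, r)) = fun r : ℝ => sqMap (x, 0) + r • e₁ :=
        funext fun r => sqMap_param x r
      rw [← h2] at h1
      exact h1.hasDerivWithinAt
    have hwd : HasDerivWithinAt w (D t e₁) (Icc (p 1) (p 1 + ℓ)) t :=
      hu'.comp_hasDerivWithinAt t hφ hmaps
    have hin := hwd.inner ℝ hwd
    have h3 : (fun r => (inner ℝ (w r) (w r) : ℝ)) = g := by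
      funext r; rw [hg]; rw [real_inner_self_eq_norm_sq]
    rw [h3] at hin
    have e : 2 * (inner ℝ (w t) (D t e₁) : ℝ) = inner ℝ (w t) (D t e₁) + inner ℝ (D t e₁) (w t) := by
      rw [real_inner_comm]; ring
    rw [e]; exact hin
  -- G facts
  have hhi : IntegrableOn h (Icc (p 1) (p 1 + ℓ)) := hhc.integrableOn_compact isCompact_Icc
  have hGc : ContinuousOn G (Icc (p 1) (p 1 + ℓ)) := by
    have := intervalIntegral.continuousOn_primitive_interval
      (a := p 1) (b := p 1 + ℓ) (f := h) (μ := volume) (by rwa [uIcc_of_le hbB])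
    rwa [uIcc_of_le hbB] at this
  have hG' : ∀ t ∈ Ioo (p 1) (p 1 + ℓ), HasDerivAt G (h t) t := by
    intro t ht
    apply intervalIntegral.integral_hasDerivAt_right
    · refine (hhc.mono ?_).intervalIntegrable
      rw [uIcc_of_le ht.1.le]; exact Icc_subset_Icc le_rfl ht.2.le
    · exact (hhc.mono Ioo_subset_Icc_self).stronglyMeasurableAtFilter isOpen_Ioo t ht
    · have hnn : Icc (p 1) (p 1 + ℓ) ∈ nhds t :=
        Filter.mem_of_superset (isOpen_Ioo.mem_nhds ht) Ioo_subset_Icc_self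
      exact (hhc t (Ioo_subset_Icc_self ht)).continuousAt hnn
  -- monotonicity of g + G
  have hmono : MonotoneOn (fun t => g t + G t) (Icc (p 1) (p 1 + ℓ)) := by
    apply monotoneOn_of_hasDerivWithinAt_nonneg (convex_Icc _ _) (hgc.add hGc)
      (f' := fun t => 2 * (inner ℝ (w t) (D t e₁) : ℝ) + h t)
    · intro t ht
      rw [interior_Icc] at ht
      exact ((hder t (Ioo_subset_Icc_self ht)).mono interior_subset).add
        (hG' t ht).hasDerivWithinAt
    · intro t ht
      rw [interior_Icc] at ht
      have h1 : |(inner ℝ (w t) (D t e₁) : ℝ)| ≤ ‖w t‖ * ‖D t e₁‖ := abs_real_inner_le_norm _ _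
      have h2 : ‖w t‖ ≤ 1 := hb1 _ (hmaps (Ioo_subset_Icc_self ht))
      have h3 : ‖w t‖ * ‖D t e₁‖ ≤ ‖D t e₁‖ := by
        nlinarith [norm_nonneg (D t e₁), norm_nonneg (w t)]
      have := abs_le.1 h1
      simp only [hh]
      nlinarith [this.1]
  -- boundary value
  have hgb : 1/5 ≤ g (p 1) := by
    apply hbd
    apply mem_frontier_Qset p ℓ hl (mem_Qset_sqMap p ℓ hx ⟨le_rfl, hbB⟩)
    rfl
  -- combine
  have hGb : G (p 1) = 0 := intervalIntegral.integral_same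
  have hstep : g (p 1) + G (p 1) ≤ g t₀ + G t₀ := hmono ⟨le_rfl, hbB⟩ ht₀ ht₀.1
  have hGt₀ : G t₀ ≤ ∫ t in Icc (p 1) (p 1 + ℓ), h t := by
    rw [hG]
    simp only
    rw [intervalIntegral.integral_of_le ht₀.1]
    apply setIntegral_mono_set hhi
    · exact ae_of_all _ fun t => by positivity
    · exact HasSubset.Subset.eventuallyLE (fun t ht => ⟨ht.1.le, ht.2.trans ht₀.2⟩)
  have key : 1/30 ≤ ∫ t in Icc (p 1) (p 1 + ℓ), h t := by
    have : g (p 1) - g t₀ ≤ G t₀ := by rw [hGb] at hstep; linarith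
    have h6 : g t₀ < 1/6 := hsm
    linarith
  -- compare h with constant + quadratic
  have hcomp : ∫ t in Icc (p 1) (p 1 + ℓ), h t ≤
      ∫ t in Icc (p 1) (p 1 + ℓ), (1/(60*ℓ) + 60*ℓ*‖D t e₁‖^2) := by
    apply setIntegral_mono_on hhi
    · exact (integrableOn_const (by simp [Real.volume_Icc])).add
        ((hFc.integrableOn_compact isCompact_Icc).const_mul _)
    · exact measurableSet_Icc
    · intro t ht
      have hn : (0:ℝ) ≤ ‖D t e₁‖ := norm_nonneg _
      have key2 : 0 ≤ (1 - 60*ℓ*‖D t e₁‖)^2 := sq_nonneg _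
      rw [hh]
      simp only
      rw [div_add' _ _ _ (by positivity : (60:ℝ)*ℓ ≠ 0), le_div_iff₀ (by positivity)]
      nlinarith
  have hconst : ∫ t in Icc (p 1) (p 1 + ℓ), (1/(60*ℓ) + 60*ℓ*‖D t e₁‖^2)
      = 1/60 + 60*ℓ*(∫ t in Icc (p 1) (p 1 + ℓ), ‖D t e₁‖^2) := by
    rw [integral_add (integrableOn_const (C := 1/(60*ℓ)) (s := Icc (p 1) (p 1 + ℓ)) (μ := volume) (by simp [Real.volume_Icc]))
      ((hFc.integrableOn_compact isCompact_Icc).const_mul _)]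
    rw [setIntegral_const, integral_const_mul]
    rw [Real.volume_real_Icc_of_le hbB]
    simp only [add_sub_cancel_left, ENNReal.toReal_ofReal hl.le, smul_eq_mul]
    field_simp
  have hI0 : 0 ≤ ∫ t in Icc (p 1) (p 1 + ℓ), ‖D t e₁‖^2 :=
    setIntegral_nonneg measurableSet_Icc fun t _ => by positivity
  have hfinal : 1/60 ≤ 60*ℓ*(∫ t in Icc (p 1) (p 1 + ℓ), ‖D t e₁‖^2) := by
    rw [hconst] at hcomp
    linarith
  rw [div_le_iff₀ (by positivity)]
  nlinarith

lemma mapsTo_sqMap : MapsTo sqMap (Icc (p 0) (p 0 + ℓ) ×ˢ Icc (p 1) (p 1 + ℓ)) (Qset p ℓ) :=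
  fun z hz => mem_Qset_sqMap p ℓ hz.1 hz.2

lemma F_contOn (hl : 0 < ℓ) (hcd : ContDiffOn ℝ 1 u (Qset p ℓ)) (j : Fin 2) :
    ContinuousOn
      (fun z : ℝ × ℝ => ‖fderivWithin ℝ u (Qset p ℓ) (sqMap z) (EuclideanSpace.single j (1:ℝ))‖^2)
      (Icc (p 0) (p 0 + ℓ) ×ˢ Icc (p 1) (p 1 + ℓ)) := by
  have hDQ : ContinuousOn (fderivWithin ℝ u (Qset p ℓ)) (Qset p ℓ) :=
    hcd.continuousOn_fderivWithin (uniqueDiffOn_Qset p ℓ hl) le_rfl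
  have hDc : ContinuousOn (fun z : ℝ × ℝ => fderivWithin ℝ u (Qset p ℓ) (sqMap z))
      (Icc (p 0) (p 0 + ℓ) ×ˢ Icc (p 1) (p 1 + ℓ)) :=
    hDQ.comp sqMap_continuous.continuousOn (mapsTo_sqMap p ℓ)
  exact ((hDc.clm_apply continuousOn_const).norm).pow 2

lemma Ftot_contOn (hl : 0 < ℓ) (hcd : ContDiffOn ℝ 1 u (Qset p ℓ)) :
    ContinuousOn
      (fun z : ℝ × ℝ => ∑ j : Fin 2,
        ‖fderivWithin ℝ u (Qset p ℓ) (sqMap z) (EuclideanSpace.single j (1:ℝ))‖^2)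
      (Icc (p 0) (p 0 + ℓ) ×ˢ Icc (p 1) (p 1 + ℓ)) := by
  apply continuousOn_finset_sum
  intro j _
  exact F_contOn p ℓ u hl hcd j

lemma main_aux (ℓ : ℝ) (hl : 0 < ℓ) (hl1 : ℓ ≤ 1) (p : EuclideanSpace ℝ (Fin 2))
    (u : EuclideanSpace ℝ (Fin 2) → EuclideanSpace ℝ (Fin 2))
    (hcd : ContDiffOn ℝ 1 u (Qset p ℓ))
    (hb1 : ∀ y ∈ Qset p ℓ, ‖u y‖ ≤ 1)
    (hbd : ∀ y ∈ frontier (Qset p ℓ), (1:ℝ)/5 ≤ ‖u y‖^2)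
    (hint : (∫ y in Qset p ℓ,
        ∑ j : Fin 2, ‖fderivWithin ℝ u (Qset p ℓ) y (EuclideanSpace.single j (1:ℝ))‖^2)
      ≤ 1/7200 * ℓ^2) :
    volume {y ∈ Qset p ℓ | ‖u y‖^2 < 1/6} ≤ ENNReal.ofReal (ℓ^2/2) := by
  set A : Set ℝ := Icc (p 0) (p 0 + ℓ) with hA
  set Bc : Set ℝ := Icc (p 1) (p 1 + ℓ) with hBc
  set Q' : Set (ℝ × ℝ) := A ×ˢ Bc with hQ'
  set F : ℝ × ℝ → ℝ := fun z =>
    ‖fderivWithin ℝ u (Qset p ℓ) (sqMap z) (EuclideanSpace.single 1 (1:ℝ))‖^2 with hF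
  set Ftot : ℝ × ℝ → ℝ := fun z => ∑ j : Fin 2,
    ‖fderivWithin ℝ u (Qset p ℓ) (sqMap z) (EuclideanSpace.single j (1:ℝ))‖^2 with hFtot
  set S' : Set (ℝ × ℝ) := {z ∈ Q' | ‖u (sqMap z)‖^2 < 1/6} with hS'
  -- preimages
  have hQpre : eqv ⁻¹' Q' = Qset p ℓ := by
    ext y
    constructor
    · intro hy
      have h0 : y 0 ∈ A := (by exact hy.1 : (eqv y).1 ∈ A)
      have h1 : y 1 ∈ Bc := (by exact hy.2 : (eqv y).2 ∈ Bc)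
      intro i; fin_cases i
      · exact ⟨h0.1, h0.2⟩
      · exact ⟨h1.1, h1.2⟩
    · intro hy
      exact ⟨⟨(hy 0).1, (hy 0).2⟩, ⟨(hy 1).1, (hy 1).2⟩⟩
  have hSpre : eqv ⁻¹' S' = {y ∈ Qset p ℓ | ‖u y‖^2 < 1/6} := by
    ext y
    have h2 : sqMap (eqv y) = y := sqMap_eqv y
    constructor
    · intro hy
      refine ⟨?_, ?_⟩
      · rw [← hQpre]; exact hy.1
      · rw [← h2]; exact hy.2
    · intro hy
      refine ⟨?_, ?_⟩
      · rw [← hQpre] at hy; exact hy.1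
      · rw [h2]; exact hy.2
  -- measurability of S'
  have hQ'meas : MeasurableSet Q' := measurableSet_Icc.prod measurableSet_Icc
  have hucont : ContinuousOn (fun z => ‖u (sqMap z)‖^2) Q' :=
    ((hcd.continuousOn.comp sqMap_continuous.continuousOn (mapsTo_sqMap p ℓ)).norm).pow 2
  have hS'meas : MeasurableSet S' := by
    obtain ⟨V, hV, hVeq⟩ := (continuousOn_iff'.1 hucont) (Iio (1/6)) isOpen_Iio
    have : S' = V ∩ Q' := by
      rw [hS', ← hVeq]
      ext z
      exact ⟨fun hz => ⟨hz.2, hz.1⟩, fun hz => ⟨hz.2, hz.1⟩⟩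
    rw [this]
    exact hV.measurableSet.inter hQ'meas
  -- transfer volume
  have hvol : volume {y ∈ Qset p ℓ | ‖u y‖^2 < 1/6} = volume S' := by
    rw [← hSpre]
    exact eqv_preserving.measure_preimage hS'meas.nullMeasurableSet
  -- section bound
  have hsec : ∀ x : ℝ, volume (Prod.mk x ⁻¹' S') ≤
      A.indicator (fun x => ENNReal.ofReal (3600*ℓ^2) *
        ∫⁻ t in Bc, ENNReal.ofReal (F (x, t))) x := by
    intro x
    by_cases hx : x ∈ A
    · rw [indicator_of_mem hx]
      rcases eq_empty_or_nonempty (Prod.mk x ⁻¹' S') with hemp | ⟨t₀, ht₀⟩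
      · rw [hemp]; simp
      · have ht₀Q : (x, t₀) ∈ S' := ht₀
        have hslice := slice_lower_bound p ℓ u hl hcd hb1 hbd hx ht₀Q.1.2 ht₀Q.2
        have hsub : Prod.mk x ⁻¹' S' ⊆ Bc := fun t ht => ht.1.2
        have h1 : volume (Prod.mk x ⁻¹' S') ≤ ENNReal.ofReal ℓ := by
          refine (measure_mono hsub).trans ?_
          rw [hBc, Real.volume_Icc, add_sub_cancel_left]
        refine h1.trans ?_
        -- slice integrability
        have hFsl : ContinuousOn (fun t => F (x, t)) Bc := by
          have := (F_contOn p ℓ u hl hcd 1).comp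
            ((continuous_const.prodMk continuous_id).continuousOn (s := Bc))
            (fun t ht => ⟨hx, ht⟩)
          exact this
        have hFint : IntegrableOn (fun t => F (x, t)) Bc :=
          hFsl.integrableOn_compact isCompact_Icc
        have heq : ENNReal.ofReal (∫ t in Bc, F (x, t)) = ∫⁻ t in Bc, ENNReal.ofReal (F (x, t)) :=
          ofReal_integral_eq_lintegral_ofReal hFint
            (ae_of_all _ fun t => by positivity)
        calc ENNReal.ofReal ℓ
            = ENNReal.ofReal (3600*ℓ^2) * ENNReal.ofReal (1/(3600*ℓ)) := by
              rw [← ENNReal.ofReal_mul (by positivity)]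
              congr 1
              field_simp
          _ ≤ ENNReal.ofReal (3600*ℓ^2) * ENNReal.ofReal (∫ t in Bc, F (x, t)) :=
              mul_le_mul_right (ENNReal.ofReal_le_ofReal hslice) _
          _ = _ := by rw [heq]
    · rw [indicator_of_notMem hx]
      have : Prod.mk x ⁻¹' S' = ∅ := by
        ext t
        simp only [mem_preimage, mem_empty_iff_false, iff_false]
        intro ht
        exact hx ht.1.1
      rw [this]
      simp
  -- Tonelli
  have hprod : volume S' = ∫⁻ x, volume (Prod.mk x ⁻¹' S') := by
    rw [Measure.volume_eq_prod, Measure.prod_apply hS'meas]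
  have hbound1 : volume S' ≤
      ∫⁻ x in A, ENNReal.ofReal (3600*ℓ^2) * ∫⁻ t in Bc, ENNReal.ofReal (F (x, t)) := by
    rw [hprod, ← lintegral_indicator measurableSet_Icc]
    exact lintegral_mono hsec
  have hbound2 : (∫⁻ x in A, ENNReal.ofReal (3600*ℓ^2) * ∫⁻ t in Bc, ENNReal.ofReal (F (x, t)))
      = ENNReal.ofReal (3600*ℓ^2) * ∫⁻ z in Q', ENNReal.ofReal (F z) := by
    rw [lintegral_const_mul' _ _ ENNReal.ofReal_ne_top]
    congr 1
    have hFae : AEMeasurable (fun z => ENNReal.ofReal (F z)) ((volume : Measure (ℝ×ℝ)).restrict Q') :=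
      ENNReal.measurable_ofReal.comp_aemeasurable ((F_contOn p ℓ u hl hcd 1).aemeasurable hQ'meas)
    rw [hQ', Measure.volume_eq_prod, ← Measure.prod_restrict]
    rw [lintegral_prod _ (by rwa [Measure.prod_restrict, ← Measure.volume_eq_prod, ← hQ'])]
  have hstep3 : (∫⁻ z in Q', ENNReal.ofReal (F z)) ≤ ∫⁻ z in Q', ENNReal.ofReal (Ftot z) := by
    apply lintegral_mono
    intro z
    apply ENNReal.ofReal_le_ofReal
    exact Finset.single_le_sum (f := fun j : Fin 2 =>
      ‖fderivWithin ℝ u (Qset p ℓ) (sqMap z) (EuclideanSpace.single j (1:ℝ))‖^2)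
      (fun j _ => by positivity) (Finset.mem_univ 1)
  have hstep4 : (∫⁻ z in Q', ENNReal.ofReal (Ftot z)) = ENNReal.ofReal (∫ z in Q', Ftot z) := by
    rw [ofReal_integral_eq_lintegral_ofReal
      ((Ftot_contOn p ℓ u hl hcd).integrableOn_compact (isCompact_Icc.prod isCompact_Icc))
      (ae_of_all _ fun z => by positivity)]
  have hstep5 : (∫ z in Q', Ftot z) = ∫ y in Qset p ℓ,
      ∑ j : Fin 2, ‖fderivWithin ℝ u (Qset p ℓ) y (EuclideanSpace.single j (1:ℝ))‖^2 := by
    rw [← eqv_preserving.setIntegral_preimage_emb eqv.measurableEmbedding Ftot Q', hQpre]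
    apply setIntegral_congr_fun ((isClosed_Qset p ℓ).measurableSet)
    intro y _
    simp only [hFtot, sqMap_eqv]
  have hfin : volume S' ≤ ENNReal.ofReal (3600*ℓ^2) * ENNReal.ofReal (1/7200 * ℓ^2) := by
    refine hbound1.trans ?_
    rw [hbound2]
    refine mul_le_mul_right ((hstep3.trans_eq hstep4).trans ?_) _
    apply ENNReal.ofReal_le_ofReal
    rw [hstep5]
    exact hint
  rw [hvol]
  refine hfin.trans ?_
  rw [← ENNReal.ofReal_mul (by positivity)]
  apply ENNReal.ofReal_le_ofReal
  have h2 : ℓ^2 ≤ 1 := by nlinarith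
  nlinarith [mul_nonneg (sq_nonneg ℓ) (sub_nonneg.2 h2)]


/-- There is a universal constant `c₀ > 0` with the following property: for every closed
square `Q ⊂ ℝ²` of side length `ℓ ∈ (0,1]` and every `C¹` map `u : Q → ℝ²` with `|u| ≤ 1`
on `Q` and `|u|² ≥ 1/5` on `∂Q`, if `∫_Q |Du|² ≤ c₀ ℓ²` then
`|{y ∈ Q : |u(y)|² < 1/6}| ≤ ℓ²/2`. -/
theorem measure_small_values_le :
    ∃ c₀ : ℝ, 0 < c₀ ∧
      ∀ ℓ : ℝ, 0 < ℓ → ℓ ≤ 1 →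
      ∀ p : EuclideanSpace ℝ (Fin 2),
      ∀ u : EuclideanSpace ℝ (Fin 2) → EuclideanSpace ℝ (Fin 2),
        (fun Q : Set (EuclideanSpace ℝ (Fin 2)) =>
          ContDiffOn ℝ 1 u Q →
          (∀ y ∈ Q, ‖u y‖ ≤ 1) →
          (∀ y ∈ frontier Q, (1 : ℝ) / 5 ≤ ‖u y‖ ^ 2) →
          (∫ y in Q,
              ∑ j : Fin 2, ‖fderivWithin ℝ u Q y (EuclideanSpace.single j (1 : ℝ))‖ ^ 2)
            ≤ c₀ * ℓ ^ 2 →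
          volume {y ∈ Q | ‖u y‖ ^ 2 < 1 / 6} ≤ ENNReal.ofReal (ℓ ^ 2 / 2))
        {y : EuclideanSpace ℝ (Fin 2) | ∀ i, p i ≤ y i ∧ y i ≤ p i + ℓ} := by
  exact ⟨1/7200, by norm_num, fun ℓ hl hl1 p u hcd hb1 hbd hint => main_aux ℓ hl hl1 p u hcd hb1 hbd hint⟩
end
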